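/- Let B := {(p,q) ∈ ℕ × ℕ : q ≠ 1} and let R be the free ℤ-module on B, with basis elements e(p,q). Define a ℤ-bilinear multiplication on R by setting, on basis elements, e(p,q) · e(p',q') := e(p+p'+q', q) + e(p+p'+q, q') − e(p+p'+q+q', 0). Then: (1) this multiplication is commutative; (2) it is associative; (3) e(0,0) is a two-sided unit; (4) for all (p,q) ∈ B one has e(p,q) = e(1,0)^p · e(0,q), so R is generated as a (commutative, associative, unital) ring by e(1,0) and {e(0,q) : q ≥ 2}. -/

import Mathlib

/-- The index set `B = {(p,q) ∈ ℕ × ℕ : q ≠ 1}` of the basic types `C_{p,q}`. -/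
def BasicIdx : Type := {pq : ℕ × ℕ // pq.2 ≠ 1}

/-- The basis element `e(p,q)` of the free ℤ-module on `B`. -/
noncomputable def e (p q : ℕ) (h : q ≠ 1) : BasicIdx →₀ ℤ :=
  Finsupp.single ⟨(p, q), h⟩ 1

/-- The ℤ-bilinear multiplication determined on basis elements by
`e(p,q) · e(p',q') = e(p+p'+q', q) + e(p+p'+q, q') − e(p+p'+q+q', 0)`. -/
noncomputable def mulR (x y : BasicIdx →₀ ℤ) : BasicIdx →₀ ℤ :=
  x.sum fun a ca => y.sum fun b cb =>
    (ca * cb) •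
      (e (a.1.1 + b.1.1 + b.1.2) a.1.2 a.2
        + e (a.1.1 + b.1.1 + a.1.2) b.1.2 b.2
        - e (a.1.1 + b.1.1 + a.1.2 + b.1.2) 0 Nat.zero_ne_one)

/-- The value of the product on a pair of basis elements. -/
noncomputable def F (a b : BasicIdx) : BasicIdx →₀ ℤ :=
  e (a.1.1 + b.1.1 + b.1.2) a.1.2 a.2
    + e (a.1.1 + b.1.1 + a.1.2) b.1.2 b.2
    - e (a.1.1 + b.1.1 + a.1.2 + b.1.2) 0 Nat.zero_ne_one

lemma mulR_def (x y : BasicIdx →₀ ℤ) :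
    mulR x y = x.sum fun a ca => y.sum fun b cb => (ca * cb) • F a b := rfl

lemma e_congr {p p' q : ℕ} (h : q ≠ 1) (hp : p = p') : e p q h = e p' q h := by
  subst hp; rfl

lemma single_mul_single (a b : BasicIdx) (ca cb : ℤ) :
    mulR (Finsupp.single a ca) (Finsupp.single b cb) = (ca * cb) • F a b := by
  rw [mulR_def, Finsupp.sum_single_index, Finsupp.sum_single_index] <;> simp

lemma mulR_zero_left (y : BasicIdx →₀ ℤ) : mulR 0 y = 0 := by
  simp [mulR_def]

lemma mulR_zero_right (x : BasicIdx →₀ ℤ) : mulR x 0 = 0 := by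
  simp [mulR_def]

lemma mulR_add_left (x x' y : BasicIdx →₀ ℤ) :
    mulR (x + x') y = mulR x y + mulR x' y := by
  simp [mulR_def, Finsupp.sum_add_index', add_mul, add_smul, Finsupp.sum_add]

lemma mulR_add_right (x y y' : BasicIdx →₀ ℤ) :
    mulR x (y + y') = mulR x y + mulR x y' := by
  simp [mulR_def, Finsupp.sum_add_index', mul_add, add_smul, Finsupp.sum_add]

lemma mulR_smul_left (k : ℤ) (x y : BasicIdx →₀ ℤ) :
    mulR (k • x) y = k • mulR x y := by
  rw [mulR_def, mulR_def, Finsupp.smul_sum,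
    Finsupp.sum_smul_index' (fun a => by simp)]
  refine Finsupp.sum_congr fun a _ => ?_
  rw [Finsupp.smul_sum]
  refine Finsupp.sum_congr fun b _ => ?_
  simp [smul_eq_mul, mul_assoc, mul_smul]

lemma mulR_smul_right (k : ℤ) (x y : BasicIdx →₀ ℤ) :
    mulR x (k • y) = k • mulR x y := by
  rw [mulR_def, mulR_def, Finsupp.smul_sum]
  refine Finsupp.sum_congr fun a _ => ?_
  rw [Finsupp.sum_smul_index' (fun b => by simp), Finsupp.smul_sum]
  refine Finsupp.sum_congr fun b _ => ?_
  simp [smul_eq_mul, mul_smul, mul_left_comm]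

lemma mulR_neg_left (x y : BasicIdx →₀ ℤ) : mulR (-x) y = - mulR x y := by
  rw [← neg_one_smul ℤ x, mulR_smul_left, neg_one_smul]

lemma mulR_sub_left (x x' y : BasicIdx →₀ ℤ) :
    mulR (x - x') y = mulR x y - mulR x' y := by
  rw [sub_eq_add_neg, mulR_add_left, mulR_neg_left, sub_eq_add_neg]

lemma mulR_neg_right (x y : BasicIdx →₀ ℤ) : mulR x (-y) = - mulR x y := by
  rw [← neg_one_smul ℤ y, mulR_smul_right, neg_one_smul]

lemma mulR_sub_right (x y y' : BasicIdx →₀ ℤ) :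
    mulR x (y - y') = mulR x y - mulR x y' := by
  rw [sub_eq_add_neg, mulR_add_right, mulR_neg_right, sub_eq_add_neg]

lemma e_mul_e (p q p' q' : ℕ) (h : q ≠ 1) (h' : q' ≠ 1) :
    mulR (e p q h) (e p' q' h') =
      e (p + p' + q') q h + e (p + p' + q) q' h'
        - e (p + p' + q + q') 0 Nat.zero_ne_one := by
  exact (single_mul_single (⟨(p, q), h⟩ : BasicIdx) ⟨(p', q'), h'⟩ 1 1).trans
    (by rw [one_mul, one_smul]; rfl)

lemma single_eq_smul_e (p q : ℕ) (h : q ≠ 1) (c : ℤ) :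
    Finsupp.single (⟨(p, q), h⟩ : BasicIdx) c = c • e p q h := by
  exact (Finsupp.smul_single_one _ c).symm

lemma single_eq_smul_e' (a : BasicIdx) (c : ℤ) :
    Finsupp.single a c = c • e a.1.1 a.1.2 a.2 :=
  (Finsupp.smul_single_one _ c).symm

lemma comm_ss (a b : BasicIdx) (ca cb : ℤ) :
    mulR (Finsupp.single a ca) (Finsupp.single b cb)
    = mulR (Finsupp.single b cb) (Finsupp.single a ca) := by
  rw [single_eq_smul_e', single_eq_smul_e']
  obtain ⟨⟨p, q⟩, h⟩ := a
  obtain ⟨⟨p', q'⟩, h'⟩ := b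
  dsimp only
  rw [mulR_smul_left, mulR_smul_right,
    mulR_smul_left, mulR_smul_right, e_mul_e, e_mul_e, smul_comm]
  congr 1
  congr 1
  rw [e_congr h (by omega : p + p' + q' = p' + p + q'),
      e_congr h' (by omega : p + p' + q = p' + p + q),
      e_congr Nat.zero_ne_one (by omega : p + p' + q + q' = p' + p + q' + q)]
  abel

lemma assoc_eee (p q p' q' p'' q'' : ℕ) (h : q ≠ 1) (h' : q' ≠ 1) (h'' : q'' ≠ 1) :
    mulR (mulR (e p q h) (e p' q' h')) (e p'' q'' h'') =
      mulR (e p q h) (mulR (e p' q' h') (e p'' q'' h'')) := by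
  rw [e_mul_e, e_mul_e, mulR_sub_left, mulR_add_left, mulR_sub_right, mulR_add_right,
    e_mul_e, e_mul_e, e_mul_e, e_mul_e, e_mul_e, e_mul_e]
  simp only [e]
  ring_nf
  abel

lemma assoc_sss (a b c : BasicIdx) (ca cb cc : ℤ) :
    mulR (mulR (Finsupp.single a ca) (Finsupp.single b cb)) (Finsupp.single c cc)
    = mulR (Finsupp.single a ca) (mulR (Finsupp.single b cb) (Finsupp.single c cc)) := by
  rw [single_eq_smul_e', single_eq_smul_e', single_eq_smul_e']
  obtain ⟨⟨p, q⟩, h⟩ := a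
  obtain ⟨⟨p', q'⟩, h'⟩ := b
  obtain ⟨⟨p'', q''⟩, h''⟩ := c
  dsimp only
  simp only [mulR_smul_left, mulR_smul_right, smul_smul]
  rw [assoc_eee]
  congr 1
  ring

lemma mulR_comm (x y : BasicIdx →₀ ℤ) : mulR x y = mulR y x := by
  induction x using Finsupp.induction_linear with
  | zero => rw [mulR_zero_left, mulR_zero_right]
  | add f g hf hg => rw [mulR_add_left, mulR_add_right, hf, hg]
  | single a ca =>
    induction y using Finsupp.induction_linear with
    | zero => rw [mulR_zero_left, mulR_zero_right]
    | add f g hf hg => rw [mulR_add_left, mulR_add_right, hf, hg]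
    | single b cb => exact comm_ss a b ca cb

lemma mulR_assoc (x y z : BasicIdx →₀ ℤ) :
    mulR (mulR x y) z = mulR x (mulR y z) := by
  induction x using Finsupp.induction_linear with
  | zero => rw [mulR_zero_left, mulR_zero_left, mulR_zero_left]
  | add f g hf hg => rw [mulR_add_left, mulR_add_left, mulR_add_left, hf, hg]
  | single a ca =>
    induction y using Finsupp.induction_linear with
    | zero => simp only [mulR_zero_left, mulR_zero_right]
    | add f g hf hg =>
        simp only [mulR_add_left, mulR_add_right, hf, hg]
    | single b cb =>
      induction z using Finsupp.induction_linear with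
      | zero => simp only [mulR_zero_right]
      | add f g hf hg =>
          simp only [mulR_add_right, hf, hg]
      | single c cc => exact assoc_sss a b c ca cb cc

lemma one_mul_e (p q : ℕ) (h : q ≠ 1) :
    mulR (e 0 0 Nat.zero_ne_one) (e p q h) = e p q h := by
  rw [e_mul_e,
    e_congr Nat.zero_ne_one (show 0 + p + q = 0 + p + 0 + q by omega),
    e_congr h (show 0 + p + 0 = p by omega)]
  abel

lemma mulR_one_left (x : BasicIdx →₀ ℤ) : mulR (e 0 0 Nat.zero_ne_one) x = x := by
  induction x using Finsupp.induction_linear with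
  | zero => rw [mulR_zero_right]
  | add f g hf hg => rw [mulR_add_right, hf, hg]
  | single a ca =>
    rw [single_eq_smul_e', mulR_smul_right, one_mul_e]

lemma e_step (p q : ℕ) (h : q ≠ 1) :
    mulR (e 1 0 Nat.zero_ne_one) (e p q h) = e (p + 1) q h := by
  rw [e_mul_e,
    e_congr Nat.zero_ne_one (show 1 + p + q = 1 + p + 0 + q by omega),
    e_congr h (show 1 + p + 0 = p + 1 by omega)]
  abel

/-- Corollary 4.5: the multiplication `mulR` on the free ℤ-module on
`B = {(p,q) : q ≠ 1}` is (1) commutative, (2) associative, (3) has `e(0,0)` as a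
two-sided unit, and (4) satisfies `e(p,q) = e(1,0)^p · e(0,q)`, so the ring is generated
by `e(1,0)` and `{e(0,q) : q ≥ 2}`. -/
theorem stmt_6 :
    (∀ x y : BasicIdx →₀ ℤ, mulR x y = mulR y x) ∧
    (∀ x y z : BasicIdx →₀ ℤ, mulR (mulR x y) z = mulR x (mulR y z)) ∧
    (∀ x : BasicIdx →₀ ℤ, mulR (e 0 0 Nat.zero_ne_one) x = x ∧
        mulR x (e 0 0 Nat.zero_ne_one) = x) ∧
    (∀ (p q : ℕ) (h : q ≠ 1),
        e p q h = (mulR (e 1 0 Nat.zero_ne_one))^[p] (e 0 q h)) := by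
  refine ⟨mulR_comm, mulR_assoc,
    fun x => ⟨mulR_one_left x, by rw [mulR_comm]; exact mulR_one_left x⟩,
    fun p q h => ?_⟩
  induction p with
  | zero => rfl
  | succ n ih => rw [Function.iterate_succ_apply', ← ih, e_step]
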